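/- Let (X,ν) be a metric measure space with ν locally finite, and A ⊆ X compact such that ν(B_r(x)) ≥ ϑ r^s for all x ∈ A and 0 < r < δ, for some constants ϑ, δ, s > 0. Then limsup_{N→∞} N^{1/s} e_{N,∞}(A) ≤ 2 ϑ^{-1/s} ν(A)^{1/s}, where e_{N,∞}(A) is the smallest radius r such that A can be covered by N closed balls of radius r with centers in A. -/

import Mathlib

open MeasureTheory Filter Metric Set
open scoped ENNReal NNReal Topology

/-- The `N`-th covering radius of `A`, with centers taken in `A`. -/
noncomputable def covRad {X : Type*} [MetricSpace X] (A : Set X) (N : ℕ) : ℝ≥0∞ :=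
  ⨅ (S : Finset X) (_ : ↑S ⊆ A) (_ : S.Nonempty) (_ : S.card ≤ N),
    ⨆ x ∈ A, ENNReal.ofReal (infDist x (S : Set X))

/-- A maximal `r`-separated subset of a nonempty compact set: it is finite, separated,
and every point of `A` is within distance `< r` of it. -/
lemma exists_maximal_separated {X : Type*} [MetricSpace X] {A : Set X}
    (hA : IsCompact A) (hAne : A.Nonempty) {r : ℝ} (hr : 0 < r) :
    ∃ M : Finset X, ↑M ⊆ A ∧ M.Nonempty ∧
      ((M : Set X).Pairwise fun x y => r ≤ dist x y) ∧
      ∀ x ∈ A, ∃ m ∈ M, dist x m < r := by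
  set 𝒮 : Set (Set X) := {M | M ⊆ A ∧ M.Pairwise fun x y => r ≤ dist x y} with h𝒮
  have hchain : ∀ c ⊆ 𝒮, IsChain (· ⊆ ·) c → c.Nonempty →
      ∃ ub ∈ 𝒮, ∀ s ∈ c, s ⊆ ub := by
    intro c hc hch _
    refine ⟨⋃₀ c, ⟨sUnion_subset fun s hs => (hc hs).1, ?_⟩,
      fun s hs => subset_sUnion_of_mem hs⟩
    intro x hx y hy hxy
    obtain ⟨u, hu, hxu⟩ := hx
    obtain ⟨v, hv, hyv⟩ := hy
    rcases hch.total hu hv with h | h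
    · exact (hc hv).2 (h hxu) hyv hxy
    · exact (hc hu).2 hxu (h hyv) hxy
  obtain ⟨M, -, hM⟩ := zorn_subset_nonempty 𝒮 hchain ∅ ⟨empty_subset A, pairwise_empty _⟩
  have hMA : M ⊆ A := hM.prop.1
  have hsep : M.Pairwise fun x y => r ≤ dist x y := hM.prop.2
  have hcov : ∀ x ∈ A, ∃ m ∈ M, dist x m < r := by
    intro x hx
    by_contra hcon
    push_neg at hcon
    have hxM : x ∉ M := by
      intro hxm
      have := hcon x hxm
      simp only [dist_self] at this
      linarith
    have hins : insert x M ∈ 𝒮 := by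
      refine ⟨insert_subset hx hMA, ?_⟩
      haveI : Std.Symm (fun x y : X => r ≤ dist x y) := ⟨fun a b hab => by rwa [dist_comm]⟩
      rw [pairwise_insert_of_symm]
      exact ⟨hsep, fun b hb _ => hcon b hb⟩
    have := hM.2 hins (subset_insert x M)
    exact hxM (this (mem_insert x M))
  have hfin : M.Finite := by
    obtain ⟨t, htfin, htcov⟩ := (totallyBounded_iff.mp hA.totallyBounded) (r / 2)
      (half_pos hr)
    have hMsub : M ⊆ ⋃ y ∈ t, M ∩ ball y (r / 2) := by
      intro m hm
      obtain ⟨y, hy, hmy⟩ := mem_iUnion₂.mp (htcov (hMA hm))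
      exact mem_iUnion₂.mpr ⟨y, hy, hm, hmy⟩
    refine Set.Finite.subset (Set.Finite.biUnion htfin fun y _ => ?_) hMsub
    refine Set.Subsingleton.finite fun a ha b hb => ?_
    by_contra hab
    have := hsep ha.1 hb.1 hab
    have hda := mem_ball.mp ha.2
    have hdb := mem_ball.mp hb.2
    have : dist a b < r := by
      calc dist a b ≤ dist a y + dist y b := dist_triangle a y b
        _ < r / 2 + r / 2 := by rw [dist_comm y b]; linarith
        _ = r := by ring
    linarith [hsep ha.1 hb.1 hab]
  obtain ⟨x, hx⟩ := hAne
  obtain ⟨m, hm, -⟩ := hcov x hx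
  refine ⟨hfin.toFinset, by simpa using hMA, ⟨m, hfin.mem_toFinset.mpr hm⟩, ?_, ?_⟩
  · simpa using hsep
  · intro y hy
    obtain ⟨m', hm', hd⟩ := hcov y hy
    exact ⟨m', hfin.mem_toFinset.mpr hm', hd⟩

/-- The packing argument: if `ν` of the `r`-thickening of `A` is smaller than
`N` times the guaranteed ball mass at scale `r/2`, then `A` can be `r`-covered
by at most `N` points of `A`. -/
lemma covRad_le_of_measure_lt {X : Type*} [MetricSpace X] [MeasurableSpace X] [BorelSpace X]
    (ν : Measure X) {A : Set X} (hA : IsCompact A) (hAne : A.Nonempty)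
    {ϑ δ s : ℝ} (hϑ : 0 < ϑ) (hδ : 0 < δ) (hs : 0 < s)
    (hconc : ∀ x ∈ A, ∀ r : ℝ, 0 < r → r < δ →
      ENNReal.ofReal (ϑ * r ^ s) ≤ ν (ball x r))
    {N : ℕ} {r : ℝ} (hr : 0 < r) (hrδ : r < δ)
    (hmeas : ν (cthickening r A) < (N : ℝ≥0∞) * ENNReal.ofReal (ϑ * (r / 2) ^ s)) :
    covRad A N ≤ ENNReal.ofReal r := by
  obtain ⟨M, hMA, hMne, hsep, hcov⟩ := exists_maximal_separated hA hAne hr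
  have hsup : (⨆ x ∈ A, ENNReal.ofReal (infDist x (M : Set X))) ≤ ENNReal.ofReal r := by
    refine iSup₂_le fun x hx => ?_
    obtain ⟨m, hm, hd⟩ := hcov x hx
    exact ENNReal.ofReal_le_ofReal
      ((infDist_le_dist_of_mem (by exact_mod_cast hm)).trans hd.le)
  by_contra hcon
  -- then `M` must have more than `N` elements
  have hcard : N < M.card := by
    by_contra hle
    push_neg at hle
    exact hcon <| le_trans
      (iInf_le_of_le M (iInf_le_of_le hMA (iInf_le_of_le hMne (iInf_le _ hle)))) hsup
  -- disjoint balls of radius `r/2`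
  have hdisj : (↑M : Set X).PairwiseDisjoint fun m => ball m (r / 2) := by
    intro x hx y hy hxy
    exact ball_disjoint_ball (by linarith [hsep hx hy hxy])
  have hball : ∀ m ∈ M, ENNReal.ofReal (ϑ * (r / 2) ^ s) ≤ ν (ball m (r / 2)) :=
    fun m hm => hconc m (hMA hm) (r / 2) (half_pos hr) (by linarith)
  have hsub : (⋃ m ∈ M, ball m (r / 2)) ⊆ cthickening r A := by
    refine iUnion₂_subset fun m hm y hy => ?_
    exact mem_cthickening_of_dist_le y m r A (hMA hm)
      (by have := mem_ball.mp hy; linarith)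
  have hge : (N : ℝ≥0∞) * ENNReal.ofReal (ϑ * (r / 2) ^ s) ≤ ν (cthickening r A) := by
    calc (N : ℝ≥0∞) * ENNReal.ofReal (ϑ * (r / 2) ^ s)
        ≤ (M.card : ℝ≥0∞) * ENNReal.ofReal (ϑ * (r / 2) ^ s) := by
          exact mul_le_mul_left (by exact_mod_cast hcard.le) _
      _ = ∑ _m ∈ M, ENNReal.ofReal (ϑ * (r / 2) ^ s) := by
          rw [Finset.sum_const, nsmul_eq_mul]
      _ ≤ ∑ m ∈ M, ν (ball m (r / 2)) := Finset.sum_le_sum hball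
      _ = ν (⋃ m ∈ M, ball m (r / 2)) :=
          (measure_biUnion_finset hdisj fun _ _ => measurableSet_ball).symm
      _ ≤ ν (cthickening r A) := measure_mono hsub
  exact absurd hmeas (not_lt.mpr hge)

/-- upper bound for the covering radii from a lower
concentration bound on ball volumes. -/
theorem stmt_12 {X : Type*} [MetricSpace X] [MeasurableSpace X] [BorelSpace X]
    (ν : Measure X) [IsLocallyFiniteMeasure ν]
    (A : Set X) (hA : IsCompact A) (hAne : A.Nonempty)
    (ϑ δ s : ℝ) (hϑ : 0 < ϑ) (hδ : 0 < δ) (hs : 0 < s)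
    (hconc : ∀ x ∈ A, ∀ r : ℝ, 0 < r → r < δ →
      ENNReal.ofReal (ϑ * r ^ s) ≤ ν (ball x r)) :
    limsup (fun N : ℕ => (N : ℝ≥0∞) ^ (1 / s) * covRad A N) atTop ≤
      ENNReal.ofReal (2 * ϑ ^ (-(1 / s))) * ν A ^ (1 / s) := by
  have hνfin : ν A ≠ ⊤ := hA.measure_lt_top.ne
  set t : ℝ := (ν A).toReal with ht
  have ht0 : 0 ≤ t := ENNReal.toReal_nonneg
  have hs' : (0 : ℝ) < 1 / s := by positivity
  -- measure of cthickenings tends to measure of A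
  have hthin : Tendsto (fun r => ν (cthickening r A)) (𝓝 0) (𝓝 (ν A)) := by
    obtain ⟨U, hAU, hUopen, hUfin⟩ := hA.exists_open_superset_measure_lt_top ν
    obtain ⟨R, hR, hRsub⟩ := hA.exists_thickening_subset_open hUopen hAU
    have h1 : ν (cthickening (R / 2) A) ≠ ⊤ := by
      refine (lt_of_le_of_lt (measure_mono ?_) hUfin).ne
      exact (cthickening_subset_thickening' hR (by linarith) A).trans hRsub
    have := tendsto_measure_cthickening (μ := ν) (s := A) ⟨R / 2, half_pos hR, h1⟩
    rwa [hA.isClosed.closure_eq] at this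
  -- the main estimate, for every η > 0
  have main : ∀ η : ℝ, 0 < η →
      limsup (fun N : ℕ => (N : ℝ≥0∞) ^ (1 / s) * covRad A N) atTop ≤
        ENNReal.ofReal (2 * ((t + η) / ϑ) ^ (1 / s)) := by
    intro η hη
    have hVpos : 0 < t + η := by linarith
    have hVof : ENNReal.ofReal (t + η) = ν A + ENNReal.ofReal η := by
      rw [ENNReal.ofReal_add ht0 hη.le, ht, ENNReal.ofReal_toReal hνfin]
    -- choose r0 > 0 such that cthickenings below r0 have measure < ofReal (t + η)
    have hev0 : ∀ᶠ r : ℝ in 𝓝 0, ν (cthickening r A) < ENNReal.ofReal (t + η) := by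
      rw [hVof]
      exact hthin.eventually_lt_const
        (ENNReal.lt_add_right hνfin (by simpa using hη))
    obtain ⟨r0, hr0, hr0p⟩ := Metric.eventually_nhds_iff.mp hev0
    -- the radii r_N
    set g : ℕ → ℝ := fun N => 2 * ((t + η) / ϑ) ^ (1 / s) * (N : ℝ) ^ (-(1 / s)) with hg
    have hgt : Tendsto g atTop (𝓝 0) := by
      have h1 : Tendsto (fun x : ℝ => x ^ (-(1 / s))) atTop (𝓝 0) :=
        tendsto_rpow_neg_atTop hs'
      have h2 : Tendsto (fun N : ℕ => ((N : ℝ)) ^ (-(1 / s))) atTop (𝓝 0) :=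
        h1.comp tendsto_natCast_atTop_atTop
      simpa only [mul_zero] using h2.const_mul (2 * ((t + η) / ϑ) ^ (1 / s))
    have hevsmall : ∀ᶠ N : ℕ in atTop, g N < min δ r0 :=
      hgt.eventually_lt_const (lt_min hδ hr0)
    have hev1 : ∀ᶠ N : ℕ in atTop, 1 ≤ N := eventually_ge_atTop 1
    have hev : ∀ᶠ N : ℕ in atTop,
        (N : ℝ≥0∞) ^ (1 / s) * covRad A N ≤
          ENNReal.ofReal (2 * ((t + η) / ϑ) ^ (1 / s)) := by
      filter_upwards [hevsmall, hev1] with N hNsmall hN1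
      have hNpos : (0 : ℝ) < (N : ℝ) := by exact_mod_cast hN1
      have hgpos : 0 < g N := by
        simp only [hg]
        exact mul_pos (mul_pos two_pos
          (Real.rpow_pos_of_pos (div_pos hVpos hϑ) _))
          (Real.rpow_pos_of_pos hNpos _)
      have hgδ : g N < δ := lt_of_lt_of_le hNsmall (min_le_left _ _)
      have hgr0 : g N < r0 := lt_of_lt_of_le hNsmall (min_le_right _ _)
      -- key computation : ϑ * (g N / 2) ^ s = (t + η) / N
      have hϑ'' : ϑ ≠ 0 := hϑ.ne'
      have hN'' : (N : ℝ) ≠ 0 := hNpos.ne'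
      have hhalf : g N / 2 = ((t + η) / ((N : ℝ) * ϑ)) ^ (1 / s) := by
        simp only [hg]
        have : (t + η) / ((N : ℝ) * ϑ) = ((t + η) / ϑ) * ((N : ℝ))⁻¹ := by
          rw [mul_comm ((N : ℝ)) ϑ, div_mul_eq_div_div, div_eq_mul_inv]
        rw [this, Real.mul_rpow (by positivity) (by positivity),
          Real.inv_rpow hNpos.le, ← Real.rpow_neg hNpos.le]
        ring
      have hϑ' : ϑ ≠ 0 := hϑ.ne'
      have hN' : (N : ℝ) ≠ 0 := hNpos.ne'
      have hx : (0 : ℝ) ≤ (t + η) / ((N : ℝ) * ϑ) := by positivity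
      have hkey : ϑ * (g N / 2) ^ s = (t + η) / N := by
        rw [hhalf, ← Real.rpow_mul hx, one_div, inv_mul_cancel₀ hs.ne', Real.rpow_one]
        field_simp
      have hmeas : ν (cthickening (g N) A) <
          (N : ℝ≥0∞) * ENNReal.ofReal (ϑ * (g N / 2) ^ s) := by
        have h1 : ν (cthickening (g N) A) < ENNReal.ofReal (t + η) :=
          hr0p (by simpa [Real.dist_eq, abs_of_pos hgpos] using hgr0)
        have h2 : (N : ℝ≥0∞) * ENNReal.ofReal (ϑ * (g N / 2) ^ s) =
            ENNReal.ofReal (t + η) := by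
          rw [hkey, ← ENNReal.ofReal_natCast,
            ← ENNReal.ofReal_mul (Nat.cast_nonneg N)]
          congr 1
          field_simp
        rw [h2]
        exact h1
      have hcovle : covRad A N ≤ ENNReal.ofReal (g N) :=
        covRad_le_of_measure_lt ν hA hAne hϑ hδ hs hconc hgpos hgδ hmeas
      have hNr : ((N : ℝ)) ^ (1 / s) ≠ 0 := (Real.rpow_pos_of_pos hNpos _).ne'
      calc (N : ℝ≥0∞) ^ (1 / s) * covRad A N
          ≤ (N : ℝ≥0∞) ^ (1 / s) * ENNReal.ofReal (g N) :=
            mul_le_mul_right hcovle _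
        _ = ENNReal.ofReal (((N : ℝ)) ^ (1 / s) * g N) := by
            rw [← ENNReal.ofReal_natCast,
              ENNReal.ofReal_rpow_of_nonneg (Nat.cast_nonneg N) hs'.le,
              ← ENNReal.ofReal_mul (by positivity)]
        _ = ENNReal.ofReal (2 * ((t + η) / ϑ) ^ (1 / s)) := by
            congr 1
            have h4 : ((N : ℝ)) ^ (1 / s) * ((N : ℝ)) ^ (-(1 / s)) = 1 := by
              rw [← Real.rpow_add hNpos]
              simp
            simp only [hg]
            calc ((N : ℝ)) ^ (1 / s) *
                  (2 * ((t + η) / ϑ) ^ (1 / s) * ((N : ℝ)) ^ (-(1 / s)))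
                = 2 * ((t + η) / ϑ) ^ (1 / s) *
                  (((N : ℝ)) ^ (1 / s) * ((N : ℝ)) ^ (-(1 / s))) := by ring
              _ = 2 * ((t + η) / ϑ) ^ (1 / s) := by rw [h4, mul_one]
    exact limsup_le_of_le (by isBoundedDefault) hev
  -- conclude by letting η → 0
  refine ENNReal.le_of_forall_pos_le_add fun ε hε _ => ?_
  have hRHS : ENNReal.ofReal (2 * ϑ ^ (-(1 / s))) * ν A ^ (1 / s) =
      ENNReal.ofReal (2 * (t / ϑ) ^ (1 / s)) := by
    have h1 : ν A ^ (1 / s) = ENNReal.ofReal (t ^ (1 / s)) := by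
      rw [ht, ← ENNReal.ofReal_toReal hνfin,
        ENNReal.ofReal_rpow_of_nonneg ENNReal.toReal_nonneg hs'.le]
      simp [ENNReal.ofReal_toReal hνfin]
    rw [h1, ← ENNReal.ofReal_mul (by positivity)]
    congr 1
    rw [Real.div_rpow ht0 hϑ.le, Real.rpow_neg hϑ.le]
    ring
  rw [hRHS]
  -- use continuity to choose η
  have hcont : ContinuousAt (fun u : ℝ => 2 * ((t + u) / ϑ) ^ (1 / s)) 0 := by
    have hinner : ContinuousAt (fun u : ℝ => (t + u) / ϑ) 0 :=
      ((continuous_const.add continuous_id).div_const ϑ).continuousAt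
    exact continuousAt_const.mul (hinner.rpow_const (Or.inr hs'.le))
  have hval : (fun u : ℝ => 2 * ((t + u) / ϑ) ^ (1 / s)) 0 = 2 * (t / ϑ) ^ (1 / s) := by
    norm_num
  have : ∀ᶠ u : ℝ in 𝓝 0, 2 * ((t + u) / ϑ) ^ (1 / s) < 2 * (t / ϑ) ^ (1 / s) + ε := by
    refine hcont.eventually_lt_const ?_
    simpa using lt_add_of_pos_right (2 * (t / ϑ) ^ (1 / s)) (show (0 : ℝ) < ε from hε)
  have hW : ∀ᶠ u : ℝ in 𝓝[>] (0 : ℝ),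
      2 * ((t + u) / ϑ) ^ (1 / s) < 2 * (t / ϑ) ^ (1 / s) + ε ∧ 0 < u :=
    (this.filter_mono nhdsWithin_le_nhds).and eventually_mem_nhdsWithin
  obtain ⟨η, hηlt, hηpos⟩ := hW.exists
  calc limsup (fun N : ℕ => (N : ℝ≥0∞) ^ (1 / s) * covRad A N) atTop
      ≤ ENNReal.ofReal (2 * ((t + η) / ϑ) ^ (1 / s)) := main η hηpos
    _ ≤ ENNReal.ofReal (2 * (t / ϑ) ^ (1 / s) + ε) := ENNReal.ofReal_le_ofReal hηlt.le
    _ = ENNReal.ofReal (2 * (t / ϑ) ^ (1 / s)) + ε := by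
        rw [ENNReal.ofReal_add (by positivity) ε.coe_nonneg, ENNReal.ofReal_coe_nnreal]
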